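/- With the dilation Ẑ, Ŵ on H ⊕ H as above, one has ‖Ẑ‖ ≤ 1 and ‖Ŵ‖ ≤ 1 (indeed ‖Ẑ‖ = ‖Ŵ‖ = 1 when Z ≠ 0). -/

import Mathlib

set_option maxHeartbeats 1000000

open ContinuousLinearMap

variable {H : Type*} [NormedAddCommGroup H] [InnerProductSpace ℂ H] [CompleteSpace H]

/-- The block operator `[[A, B],[C, D]]` acting on the Hilbert-space direct sum
`H ⊕ H = WithLp 2 (H × H)`. -/
noncomputable def blockOp (A B C D : H →L[ℂ] H) :
    WithLp 2 (H × H) →L[ℂ] WithLp 2 (H × H) :=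
  ((WithLp.prodContinuousLinearEquiv 2 ℂ H H).symm : H × H →L[ℂ] WithLp 2 (H × H)) ∘L
    ((A ∘L fst ℂ H H + B ∘L snd ℂ H H).prod (C ∘L fst ℂ H H + D ∘L snd ℂ H H)) ∘L
    ((WithLp.prodContinuousLinearEquiv 2 ℂ H H) : WithLp 2 (H × H) →L[ℂ] H × H)

section Stmt10Aux

open RCLike

local notation "⟪" x ", " y "⟫" => @inner ℂ _ _ x y

lemma stmt10_sa_inner (B : H →L[ℂ] H) (hB : IsSelfAdjoint B) (a b : H) :
    ⟪B a, b⟫ = ⟪a, B b⟫ := by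
  conv_lhs => rw [← hB.adjoint_eq]
  exact adjoint_inner_left B b a

lemma stmt10_core_eq (B S Q Qi : H →L[ℂ] H) (c : ℝ)
    (hB : IsSelfAdjoint B) (hS : IsSelfAdjoint S)
    (hSB : Commute S B)
    (hQdef : Q = B ^ 2 - ((c : ℂ)) • 1)
    (hQQi : Q * Qi = 1) (hQiQ : Qi * Q = 1)
    (hkey : S ^ 2 * B ^ 2 = (1 - B ^ 2) * Q)
    (x y : H) :
    ‖B x + S y‖ ^ 2 + ((1 + c) * ‖y‖ ^ 2 - ‖B y‖ ^ 2 - ‖S y‖ ^ 2)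
      = ‖x‖ ^ 2 + ‖y‖ ^ 2 - re ⟪Q (y - Qi (S (B x))), y - Qi (S (B x))⟫ := by
  have hQsa : IsSelfAdjoint Q := by
    rw [hQdef]
    have h2 : IsSelfAdjoint (((c : ℂ)) • (1 : H →L[ℂ] H)) := by
      rw [IsSelfAdjoint, star_smul, star_one, Complex.star_def, Complex.conj_ofReal]
    exact (hB.pow 2).sub h2
  have hQB : Commute B Q := by
    rw [hQdef]
    exact ((Commute.refl B).pow_right 2).sub_right
      (Commute.smul_right (Commute.one_right B) _)
  have hQS : Commute S Q := by
    rw [hQdef]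
    exact (hSB.pow_right 2).sub_right (Commute.smul_right (Commute.one_right S) _)
  have hinv : ∀ T : H →L[ℂ] H, Commute T Q → Commute T Qi := by
    intro T h
    exact Commute.units_inv_right (a := T) (u := ⟨Q, Qi, hQQi, hQiQ⟩) h
  have hQiBS : Commute (B * S) Qi := hinv _ (hQB.mul_left hQS)
  have OP : (B * S) * (Qi * (S * B)) = 1 - B ^ 2 := by
    have e1 : (B * S) * (Qi * (S * B)) = Qi * ((B * S) * (S * B)) := by
      rw [← mul_assoc, hQiBS.eq, mul_assoc]
    have e2 : (B * S) * (S * B) = S ^ 2 * B ^ 2 := by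
      calc B * S * (S * B) = B * (S * S * B) := by rw [mul_assoc, mul_assoc]
        _ = B * (S * S) * B := by rw [← mul_assoc]
        _ = B * S ^ 2 * B := by rw [← sq]
        _ = S ^ 2 * B * B := by rw [← (hSB.pow_left 2).eq]
        _ = S ^ 2 * B ^ 2 := by rw [mul_assoc, ← sq]
    have e3 : Commute (1 - B ^ 2) Q := (Commute.one_left Q).sub_left (hQB.pow_left 2)
    rw [e1, e2, hkey, e3.eq, ← mul_assoc, hQiQ, one_mul]
  set u := S (B x) with hu
  set y0 := Qi u with hy0
  have hu' : u = (S * B) x := by rw [ContinuousLinearMap.mul_apply]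
  have hQy0 : Q y0 = u := by
    rw [hy0, ← ContinuousLinearMap.mul_apply, hQQi, ContinuousLinearMap.one_apply]
  have hre1 : ∀ z : H, re ⟪Q z, z⟫ = ‖B z‖ ^ 2 - c * ‖z‖ ^ 2 := by
    intro z
    have hz : Q z = B (B z) - (c : ℂ) • z := by
      rw [hQdef]; simp [sq, ContinuousLinearMap.mul_apply]
    rw [hz, inner_sub_left, map_sub, inner_smul_left]
    rw [stmt10_sa_inner B hB (B z) z]
    simp [inner_self_eq_norm_sq, Complex.conj_ofReal]
    simp only [← Complex.ofReal_pow, Complex.ofReal_re]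
  have hre2 : re ⟪u, y⟫ = re ⟪B x, S y⟫ := by
    rw [hu, ← stmt10_sa_inner S hS (B x) y]
  have hre3 : re ⟪u, y0⟫ = ‖x‖ ^ 2 - ‖B x‖ ^ 2 := by
    have hadj : adjoint (B * S) = S * B := by
      rw [← star_eq_adjoint, star_mul, star_eq_adjoint, star_eq_adjoint,
        hB.adjoint_eq, hS.adjoint_eq]
    have h5 : ⟪(adjoint (B * S)) x, Qi ((S * B) x)⟫ = ⟪x, (B * S) (Qi ((S * B) x))⟫ :=
      adjoint_inner_left (B * S) (Qi ((S * B) x)) x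
    rw [hadj] at h5
    have e4 : ⟪u, y0⟫ = ⟪x, ((B * S) * (Qi * (S * B))) x⟫ := by
      rw [hy0, hu']
      rw [h5]
      simp [ContinuousLinearMap.mul_apply]
    rw [e4, OP]
    have e5 : (1 - B ^ 2 : H →L[ℂ] H) x = x - B (B x) := by simp [sq, ContinuousLinearMap.mul_apply]
    rw [e5, inner_sub_right, map_sub, ← stmt10_sa_inner B hB x (B x)]
    simp [inner_self_eq_norm_sq]
    simp only [← Complex.ofReal_pow, Complex.ofReal_re]
  have hre4 : re ⟪Q y, y0⟫ = re ⟪B x, S y⟫ := by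
    rw [stmt10_sa_inner Q hQsa y y0, hQy0, inner_re_symm]
    exact hre2
  have hre5 : re ⟪Q y0, y⟫ = re ⟪B x, S y⟫ := by rw [hQy0]; exact hre2
  have hre6 : re ⟪Q y0, y0⟫ = ‖x‖ ^ 2 - ‖B x‖ ^ 2 := by rw [hQy0]; exact hre3
  have hexp : re ⟪Q (y - y0), y - y0⟫
      = re ⟪Q y, y⟫ - re ⟪Q y, y0⟫ - re ⟪Q y0, y⟫ + re ⟪Q y0, y0⟫ := by
    rw [map_sub, inner_sub_left, inner_sub_right, inner_sub_right]
    simp only [map_sub]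
    ring
  have hnrm : ‖B x + S y‖ ^ 2 = ‖B x‖ ^ 2 + 2 * re ⟪B x, S y⟫ + ‖S y‖ ^ 2 :=
    norm_add_sq (𝕜 := ℂ) (B x) (S y)
  rw [hnrm, hexp, hre1 y, hre4, hre5, hre6]
  ring

lemma stmt10_iso (V : H →L[ℂ] H) (h : adjoint V * V = 1) (w : H) : ‖V w‖ = ‖w‖ := by
  have h1 : ⟪V w, V w⟫ = ⟪w, w⟫ := by
    rw [← adjoint_inner_left V w (V w), ← ContinuousLinearMap.mul_apply, h, ContinuousLinearMap.one_apply]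
  have h2 := congrArg re h1
  rw [inner_self_eq_norm_sq, inner_self_eq_norm_sq] at h2
  nlinarith [norm_nonneg (V w), norm_nonneg w]

lemma stmt10_sq_inner (T : H →L[ℂ] H) (hT : IsSelfAdjoint T) (z : H) :
    re ⟪(T ^ 2) z, z⟫ = ‖T z‖ ^ 2 := by
  have h0 : (T ^ 2) z = T (T z) := by rw [sq, ContinuousLinearMap.mul_apply]
  rw [h0, stmt10_sa_inner T hT (T z) z]
  exact inner_self_eq_norm_sq (𝕜 := ℂ) (T z)

lemma stmt10_Cnorm (B S C : H →L[ℂ] H) (c : ℝ)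
    (hB : IsSelfAdjoint B) (hS : IsSelfAdjoint S) (hC : IsSelfAdjoint C)
    (hsum : B ^ 2 + S ^ 2 + C ^ 2 = (((1 + c : ℝ)) : ℂ) • 1) (z : H) :
    ‖C z‖ ^ 2 = (1 + c) * ‖z‖ ^ 2 - ‖B z‖ ^ 2 - ‖S z‖ ^ 2 := by
  have h1 := congrArg (fun T : H →L[ℂ] H => re ⟪T z, z⟫) hsum
  simp only [add_apply, inner_add_left, map_add, smul_apply, ContinuousLinearMap.one_apply, inner_smul_left, Complex.conj_ofReal] at h1
  rw [stmt10_sq_inner B hB, stmt10_sq_inner S hS, stmt10_sq_inner C hC] at h1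
  rw [← Complex.real_smul, smul_re, inner_self_eq_norm_sq] at h1
  linarith

lemma stmt10_Q_inner (B : H →L[ℂ] H) (hB : IsSelfAdjoint B) (c : ℝ) (z : H) :
    re ⟪((B ^ 2 - ((c : ℝ) : ℂ) • 1 : H →L[ℂ] H)) z, z⟫ = ‖B z‖ ^ 2 - c * ‖z‖ ^ 2 := by
  have hz : ((B ^ 2 - ((c : ℝ) : ℂ) • 1 : H →L[ℂ] H)) z = B (B z) - (c : ℂ) • z := by
    simp [sq, ContinuousLinearMap.mul_apply]
  rw [hz, inner_sub_left, map_sub, inner_smul_left]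
  rw [stmt10_sa_inner B hB (B z) z]
  simp only [Complex.conj_ofReal, inner_self_eq_norm_sq]
  rw [← Complex.real_smul, smul_re, inner_self_eq_norm_sq]

lemma stmt10_half (B S C : H →L[ℂ] H) (ρ k : ℝ)
    (hρ : 0 < ρ) (hk : ρ < k)
    (hB : IsSelfAdjoint B) (hS : IsSelfAdjoint S) (hC : IsSelfAdjoint C)
    (hSB : Commute S B)
    (hCB : C * B = ((ρ : ℝ) : ℂ) • 1)
    (hsum : B ^ 2 + S ^ 2 + C ^ 2 = (((1 + ρ ^ 2 : ℝ)) : ℂ) • 1)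
    (hBge : ∀ z, k * ‖z‖ ≤ ‖B z‖) :
    (∀ x y : H, ‖B x + S y‖ ^ 2 + ‖C y‖ ^ 2 ≤ ‖x‖ ^ 2 + ‖y‖ ^ 2) ∧
    (∀ x : H, ∃ y : H, ‖B x + S y‖ ^ 2 + ‖C y‖ ^ 2 = ‖x‖ ^ 2 + ‖y‖ ^ 2) := by
  set Q : H →L[ℂ] H := B ^ 2 - ((ρ ^ 2 : ℝ) : ℂ) • 1 with hQdef
  have hQform : ∀ z, re ⟪Q z, z⟫ = ‖B z‖ ^ 2 - ρ ^ 2 * ‖z‖ ^ 2 :=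
    fun z => stmt10_Q_inner B hB (ρ ^ 2) z
  have hd : (0 : ℝ) < k ^ 2 - ρ ^ 2 := by nlinarith
  have hQcoer : ∀ z, (k ^ 2 - ρ ^ 2) * ‖z‖ ^ 2 ≤ re ⟪Q z, z⟫ := by
    intro z
    have h1 := hBge z
    have h2 := hQform z
    have h0 : 0 ≤ k * ‖z‖ := mul_nonneg (hρ.trans hk).le (norm_nonneg z)
    nlinarith [norm_nonneg z, norm_nonneg (B z), h0, h1]
  have hQpos : ∀ z, 0 ≤ re ⟪Q z, z⟫ := by
    intro z
    have h5 := hQcoer z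
    nlinarith [mul_nonneg hd.le (sq_nonneg ‖z‖)]
  have hQunit : IsUnit Q := by
    refine isUnit_of_forall_le_norm_inner_map Q (c := ⟨k ^ 2 - ρ ^ 2, hd.le⟩)
      (by exact_mod_cast hd) ?_
    intro z
    calc ‖z‖ ^ 2 * ((⟨k ^ 2 - ρ ^ 2, hd.le⟩ : NNReal) : ℝ)
        = (k ^ 2 - ρ ^ 2) * ‖z‖ ^ 2 := by simp [mul_comm]
      _ ≤ re ⟪Q z, z⟫ := hQcoer z
      _ ≤ ‖⟪Q z, z⟫‖ := re_le_norm _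
  set Qi : H →L[ℂ] H := Ring.inverse Q with hQi
  have hQQi : Q * Qi = 1 := Ring.mul_inverse_cancel Q hQunit
  have hQiQ : Qi * Q = 1 := Ring.inverse_mul_cancel Q hQunit
  have hS2 : S ^ 2 = (((1 + ρ ^ 2 : ℝ)) : ℂ) • 1 - B ^ 2 - C ^ 2 := by
    rw [← hsum]; abel
  have hC2B2 : C ^ 2 * B ^ 2 = ((ρ ^ 2 : ℝ) : ℂ) • 1 := by
    have e : C ^ 2 * B ^ 2 = C * ((C * B) * B) := by
      rw [sq, sq, mul_assoc, ← mul_assoc C B B]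
    rw [e, hCB, smul_mul_assoc, one_mul, mul_smul_comm, hCB, smul_smul,
      ← Complex.ofReal_mul, ← sq]
  have hcast : (((1 + ρ ^ 2 : ℝ)) : ℂ) • (B ^ 2) = B ^ 2 + ((ρ ^ 2 : ℝ) : ℂ) • B ^ 2 := by
    rw [show (((1 + ρ ^ 2 : ℝ)) : ℂ) = 1 + ((ρ ^ 2 : ℝ) : ℂ) from by push_cast; ring,
      add_smul, one_smul]
  have hkey : S ^ 2 * B ^ 2 = (1 - B ^ 2) * Q := by
    have hL : S ^ 2 * B ^ 2
        = B ^ 2 + ((ρ ^ 2 : ℝ) : ℂ) • B ^ 2 - B ^ 2 * B ^ 2 - ((ρ ^ 2 : ℝ) : ℂ) • 1 := by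
      rw [hS2, sub_mul, sub_mul, smul_mul_assoc, one_mul, hC2B2, hcast]
      try abel
    have hR : (1 - B ^ 2) * Q
        = B ^ 2 + ((ρ ^ 2 : ℝ) : ℂ) • B ^ 2 - B ^ 2 * B ^ 2 - ((ρ ^ 2 : ℝ) : ℂ) • 1 := by
      rw [hQdef, sub_mul, one_mul, mul_sub, mul_smul_comm, mul_one]
      try abel
    rw [hL, hR]
  have hcore := fun (x y : H) =>
    stmt10_core_eq B S Q Qi (ρ ^ 2) hB hS hSB hQdef hQQi hQiQ hkey x y
  constructor
  · intro x y
    rw [stmt10_Cnorm B S C (ρ ^ 2) hB hS hC hsum y]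
    have h3 := hcore x y
    have h4 := hQpos (y - Qi (S (B x)))
    linarith
  · intro x
    refine ⟨Qi (S (B x)), ?_⟩
    rw [stmt10_Cnorm B S C (ρ ^ 2) hB hS hC hsum (Qi (S (B x)))]
    have h3 := hcore x (Qi (S (B x)))
    rw [sub_self] at h3
    simp only [map_zero, inner_zero_left, map_zero] at h3
    linarith


end Stmt10Aux

/-- With the dilation `Ẑ = [[Z, H₀],[0, W*]]`, `Ŵ = [[W, −H₀*],[0, Z*]]`
as above, `‖Ẑ‖ ≤ 1` and `‖Ŵ‖ ≤ 1` (indeed `‖Ẑ‖ = ‖Ŵ‖ = 1` when `Z ≠ 0`). -/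
theorem stmt10 (r : ℝ) (hr : 1 < r) (Z W U A S : H →L[ℂ] H)
    (hZW : Z * W = (((r : ℂ)) ^ 2)⁻¹ • (1 : H →L[ℂ] H))
    (hWZ : W * Z = (((r : ℂ)) ^ 2)⁻¹ • (1 : H →L[ℂ] H))
    (hZ : ‖Z‖ < 1) (hW : ‖W‖ < 1)
    (hUl : adjoint U * U = 1) (hUr : U * adjoint U = 1)
    (hA : A.IsPositive) (hAunit : IsUnit A) (hpolar : Z = U * A)
    (hpolarW : W = ((((r ^ 2)⁻¹ : ℝ) : ℂ) • Ring.inverse A) * adjoint U)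
    (hS : S.IsPositive)
    (hSsq : S ^ 2 = (((1 + (r ^ 2)⁻¹) ^ 2 : ℝ) : ℂ) • (1 : H →L[ℂ] H)
      - (A + (((r ^ 2)⁻¹ : ℝ) : ℂ) • Ring.inverse A) ^ 2)
    (hSA : Commute S A) :
    ‖blockOp Z (U * S) 0 (adjoint W)‖ ≤ 1 ∧
    ‖blockOp W (-(adjoint (U * S))) 0 (adjoint Z)‖ ≤ 1 ∧
    (Z ≠ 0 →
      ‖blockOp Z (U * S) 0 (adjoint W)‖ = 1 ∧
      ‖blockOp W (-(adjoint (U * S))) 0 (adjoint Z)‖ = 1) := by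
  rcases subsingleton_or_nontrivial H with hsub | hnt
  · haveI : Subsingleton (WithLp 2 (H × H)) := (WithLp.equiv 2 (H × H)).subsingleton
    have hle : ∀ T : WithLp 2 (H × H) →L[ℂ] WithLp 2 (H × H), ‖T‖ ≤ 1 := by
      intro T
      refine ContinuousLinearMap.opNorm_le_bound _ zero_le_one fun v => ?_
      rw [Subsingleton.elim v 0]; simp
    have hZ0 : Z = 0 := by ext x; exact Subsingleton.elim _ _
    exact ⟨hle _, hle _, fun h => absurd hZ0 h⟩
  -- nontrivial case
  set ρ : ℝ := (r ^ 2)⁻¹ with hρdef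
  have hρpos : 0 < ρ := by rw [hρdef]; positivity
  have hρcast : (((r : ℂ)) ^ 2)⁻¹ = ((ρ : ℝ) : ℂ) := by rw [hρdef]; push_cast; ring
  have hrC : ((r : ℂ)) ^ 2 ≠ 0 := by
    have : (r : ℂ) ≠ 0 := by
      simp only [ne_eq, Complex.ofReal_eq_zero]; nlinarith
    exact pow_ne_zero 2 this
  have hρCne : (((r : ℂ)) ^ 2)⁻¹ ≠ 0 := inv_ne_zero hrC
  -- Z, W nonzero
  have hZne : Z ≠ 0 := by
    intro h
    obtain ⟨x, hx⟩ := exists_ne (0 : H)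
    apply hx
    have h2 := congrArg (fun T : H →L[ℂ] H => T x) hZW
    simp only [h, zero_mul, ContinuousLinearMap.zero_apply, ContinuousLinearMap.smul_apply,
      ContinuousLinearMap.one_apply] at h2
    rcases smul_eq_zero.mp h2.symm with h3 | h3
    · exact absurd h3 hρCne
    · exact h3
  have hWne : W ≠ 0 := by
    intro h
    obtain ⟨x, hx⟩ := exists_ne (0 : H)
    apply hx
    have h2 := congrArg (fun T : H →L[ℂ] H => T x) hWZ
    simp only [h, mul_zero, ContinuousLinearMap.zero_apply, ContinuousLinearMap.smul_apply,
      ContinuousLinearMap.one_apply] at h2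
    rcases smul_eq_zero.mp h2.symm with h3 | h3
    · exact absurd h3 hρCne
    · exact h3
  have hZpos : 0 < ‖Z‖ := norm_pos_iff.mpr hZne
  have hWpos : 0 < ‖W‖ := norm_pos_iff.mpr hWne
  -- basic operators
  set iA : H →L[ℂ] H := Ring.inverse A with hiAdef
  set Ahat : H →L[ℂ] H := ((ρ : ℝ) : ℂ) • iA with hAhatdef
  have hAsa : IsSelfAdjoint A := hA.isSelfAdjoint
  have hSsa : IsSelfAdjoint S := hS.isSelfAdjoint
  have hAiA : A * iA = 1 := Ring.mul_inverse_cancel A hAunit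
  have hiAA : iA * A = 1 := Ring.inverse_mul_cancel A hAunit
  have hiAsa : IsSelfAdjoint iA := by
    have h3 : star iA * A = 1 := by
      have h4 := congrArg star hAiA
      rw [star_mul, hAsa.star_eq, star_one] at h4
      exact h4
    calc star iA = star iA * (A * iA) := by rw [hAiA, mul_one]
      _ = (star iA * A) * iA := by rw [mul_assoc]
      _ = iA := by rw [h3, one_mul]
  have hAhatsa : IsSelfAdjoint Ahat := by
    rw [hAhatdef, IsSelfAdjoint, star_smul, hiAsa.star_eq, Complex.star_def,
      Complex.conj_ofReal]
  have hAAhat : A * Ahat = ((ρ : ℝ) : ℂ) • 1 := by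
    rw [hAhatdef, mul_smul_comm, hAiA]
  have hAhatA : Ahat * A = ((ρ : ℝ) : ℂ) • 1 := by
    rw [hAhatdef, smul_mul_assoc, hiAA]
  have hSiA : Commute S iA :=
    Commute.units_inv_right (a := S) (u := ⟨A, iA, hAiA, hiAA⟩) hSA
  have hSAhat : Commute S Ahat := Commute.smul_right hSiA _
  -- the sum identity
  have hsum1 : A ^ 2 + S ^ 2 + Ahat ^ 2 = (((1 + ρ ^ 2 : ℝ)) : ℂ) • 1 := by
    have hexp : (A + Ahat) ^ 2
        = A ^ 2 + ((ρ : ℝ) : ℂ) • 1 + ((ρ : ℝ) : ℂ) • 1 + Ahat ^ 2 := by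
      rw [sq, add_mul, mul_add, mul_add, hAAhat, hAhatA, ← sq, ← sq]
      abel
    have hcast2 : ((((1 + ρ) ^ 2 : ℝ)) : ℂ) • (1 : H →L[ℂ] H)
        = (((1 + ρ ^ 2 : ℝ)) : ℂ) • 1 + ((ρ : ℝ) : ℂ) • 1 + ((ρ : ℝ) : ℂ) • 1 := by
      rw [← add_smul, ← add_smul]
      congr 1
      push_cast; ring
    rw [hSsq, hexp, hcast2]
    abel
  -- isometries
  have hUiso : ∀ w, ‖U w‖ = ‖w‖ := stmt10_iso U hUl
  have hU'iso : ∀ w, ‖adjoint U w‖ = ‖w‖ :=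
    stmt10_iso (adjoint U) (by rw [adjoint_adjoint]; exact hUr)
  -- norm transfer
  have hAnorm : ∀ z, ‖A z‖ = ‖Z z‖ := by
    intro z
    rw [hpolar, ContinuousLinearMap.mul_apply, hUiso]
  have hWU : ∀ z, W (U z) = Ahat z := by
    intro z
    rw [hpolarW, ContinuousLinearMap.mul_apply, ← ContinuousLinearMap.mul_apply (adjoint U) U z, hUl, ContinuousLinearMap.one_apply]
  have hAhatnorm : ∀ z, ‖Ahat z‖ = ‖W (U z)‖ := fun z => by rw [hWU]
  have hAhatle : ∀ z, ‖Ahat z‖ ≤ ‖W‖ * ‖z‖ := by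
    intro z
    rw [hAhatnorm]
    calc ‖W (U z)‖ ≤ ‖W‖ * ‖U z‖ := W.le_opNorm (U z)
      _ = ‖W‖ * ‖z‖ := by rw [hUiso]
  have hAle : ∀ z, ‖A z‖ ≤ ‖Z‖ * ‖z‖ := by
    intro z
    rw [hAnorm]
    exact Z.le_opNorm z
  -- coercivity of A
  have hsmulnorm : ∀ z : H, ‖(((ρ : ℝ) : ℂ)) • z‖ = ρ * ‖z‖ := by
    intro z
    rw [norm_smul]
    simp [abs_of_pos hρpos]
  have hAge : ∀ z, (ρ / ‖W‖) * ‖z‖ ≤ ‖A z‖ := by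
    intro z
    have h1 : Ahat (A z) = (((ρ : ℝ) : ℂ)) • z := by
      rw [← ContinuousLinearMap.mul_apply, hAhatA, smul_apply, ContinuousLinearMap.one_apply]
    have h2 : ρ * ‖z‖ ≤ ‖W‖ * ‖A z‖ := by
      calc ρ * ‖z‖ = ‖Ahat (A z)‖ := by rw [h1, hsmulnorm]
        _ ≤ ‖W‖ * ‖A z‖ := hAhatle (A z)
    rw [div_mul_eq_mul_div, div_le_iff₀ hWpos, mul_comm ‖A z‖ ‖W‖]
    exact h2
  have hAhatge : ∀ z, (ρ / ‖Z‖) * ‖z‖ ≤ ‖Ahat z‖ := by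
    intro z
    have h1 : A (Ahat z) = (((ρ : ℝ) : ℂ)) • z := by
      rw [← ContinuousLinearMap.mul_apply, hAAhat, smul_apply, ContinuousLinearMap.one_apply]
    have h2 : ρ * ‖z‖ ≤ ‖Z‖ * ‖Ahat z‖ := by
      calc ρ * ‖z‖ = ‖A (Ahat z)‖ := by rw [h1, hsmulnorm]
        _ ≤ ‖Z‖ * ‖Ahat z‖ := hAle (Ahat z)
    rw [div_mul_eq_mul_div, div_le_iff₀ hZpos, mul_comm ‖Ahat z‖ ‖Z‖]
    exact h2
  have hk1 : ρ < ρ / ‖W‖ := by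
    rw [lt_div_iff₀ hWpos]
    nlinarith
  have hk2 : ρ < ρ / ‖Z‖ := by
    rw [lt_div_iff₀ hZpos]
    nlinarith
  -- the two halves
  have half1 := stmt10_half A S Ahat ρ (ρ / ‖W‖) hρpos hk1 hAsa hSsa hAhatsa hSA hAhatA
    hsum1 hAge
  have hsum2 : Ahat ^ 2 + S ^ 2 + A ^ 2 = (((1 + ρ ^ 2 : ℝ)) : ℂ) • 1 := by
    rw [← hsum1]; abel
  have half2 := stmt10_half Ahat S A ρ (ρ / ‖Z‖) hρpos hk2 hAhatsa hSsa hAsa hSAhat hAAhat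
    hsum2 hAhatge
  -- adjoints
  have hWadj : adjoint W = U * Ahat := by
    rw [hpolarW, ← star_eq_adjoint, star_mul, star_eq_adjoint, star_eq_adjoint,
      adjoint_adjoint, hAhatsa.adjoint_eq]
  have hZadj : adjoint Z = A * adjoint U := by
    rw [hpolar, ← star_eq_adjoint, star_mul, star_eq_adjoint, star_eq_adjoint, hAsa.adjoint_eq]
  have hUSadj : adjoint (U * S) = S * adjoint U := by
    rw [← star_eq_adjoint, star_mul, star_eq_adjoint, star_eq_adjoint, hSsa.adjoint_eq]
  -- norm computation for TZ
  set TZ := blockOp Z (U * S) 0 (adjoint W) with hTZdef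
  set TW := blockOp W (-(adjoint (U * S))) 0 (adjoint Z) with hTWdef
  have hTZsq : ∀ v : WithLp 2 (H × H),
      ‖TZ v‖ ^ 2 = ‖A v.fst + S v.snd‖ ^ 2 + ‖Ahat v.snd‖ ^ 2 := by
    intro v
    rw [WithLp.prod_norm_sq_eq_of_L2]
    have e1 : (TZ v).fst = U (A v.fst + S v.snd) := by
      show Z v.fst + (U * S) v.snd = U (A v.fst + S v.snd)
      rw [map_add, ← ContinuousLinearMap.mul_apply U A, ← ContinuousLinearMap.mul_apply U S, ← hpolar]
    have e2 : (TZ v).snd = U (Ahat v.snd) := by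
      show (0 : H →L[ℂ] H) v.fst + adjoint W v.snd = U (Ahat v.snd)
      rw [ContinuousLinearMap.zero_apply, zero_add, hWadj, ContinuousLinearMap.mul_apply]
    rw [e1, e2, hUiso, hUiso]
  have hTWsq : ∀ v : WithLp 2 (H × H),
      ‖TW v‖ ^ 2 = ‖Ahat (adjoint U v.fst) + S (-(adjoint U v.snd))‖ ^ 2
        + ‖A (-(adjoint U v.snd))‖ ^ 2 := by
    intro v
    rw [WithLp.prod_norm_sq_eq_of_L2]
    have e1 : (TW v).fst = Ahat (adjoint U v.fst) + S (-(adjoint U v.snd)) := by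
      show W v.fst + (-(adjoint (U * S))) v.snd = _
      rw [ContinuousLinearMap.neg_apply, hUSadj, hpolarW, ContinuousLinearMap.mul_apply, ContinuousLinearMap.mul_apply,
        map_neg]
    have e2 : (TW v).snd = A (adjoint U v.snd) := by
      show (0 : H →L[ℂ] H) v.fst + adjoint Z v.snd = _
      rw [ContinuousLinearMap.zero_apply, zero_add, hZadj, ContinuousLinearMap.mul_apply]
    have e3 : ‖A (adjoint U v.snd)‖ = ‖A (-(adjoint U v.snd))‖ := by
      rw [map_neg, norm_neg]
    rw [e1, e2, e3]
  -- upper bounds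
  have hTZle : ‖TZ‖ ≤ 1 := by
    refine ContinuousLinearMap.opNorm_le_bound _ zero_le_one fun v => ?_
    rw [one_mul]
    have h1 := hTZsq v
    have h2 := half1.1 v.fst v.snd
    have h3 : ‖v‖ ^ 2 = ‖v.fst‖ ^ 2 + ‖v.snd‖ ^ 2 := WithLp.prod_norm_sq_eq_of_L2 v
    nlinarith [norm_nonneg (TZ v), norm_nonneg v]
  have hTWle : ‖TW‖ ≤ 1 := by
    refine ContinuousLinearMap.opNorm_le_bound _ zero_le_one fun v => ?_
    rw [one_mul]
    have h1 := hTWsq v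
    have h2 := half2.1 (adjoint U v.fst) (-(adjoint U v.snd))
    rw [norm_neg, hU'iso, hU'iso] at h2
    have h3 : ‖v‖ ^ 2 = ‖v.fst‖ ^ 2 + ‖v.snd‖ ^ 2 := WithLp.prod_norm_sq_eq_of_L2 v
    nlinarith [norm_nonneg (TW v), norm_nonneg v]
  -- lower bounds
  obtain ⟨x0, hx0⟩ := exists_ne (0 : H)
  have hx0n : 0 < ‖x0‖ := norm_pos_iff.mpr hx0
  have hTZge : 1 ≤ ‖TZ‖ := by
    obtain ⟨y0, hy0⟩ := half1.2 x0
    set v : WithLp 2 (H × H) := (WithLp.equiv 2 (H × H)).symm (x0, y0) with hvdef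
    have hvf : v.fst = x0 := rfl
    have hvs : v.snd = y0 := rfl
    have h1 : ‖TZ v‖ ^ 2 = ‖v‖ ^ 2 := by
      rw [hTZsq v, hvf, hvs, WithLp.prod_norm_sq_eq_of_L2, hvf, hvs, hy0]
    have hvpos : 0 < ‖v‖ := by
      have h3 : ‖v‖ ^ 2 = ‖x0‖ ^ 2 + ‖y0‖ ^ 2 := by
        rw [WithLp.prod_norm_sq_eq_of_L2, hvf, hvs]
      nlinarith [norm_nonneg v, norm_nonneg y0]
    have h2 : ‖TZ v‖ = ‖v‖ := by
      nlinarith [norm_nonneg (TZ v), norm_nonneg v]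
    have h4 := TZ.le_opNorm v
    rw [h2] at h4
    exact (le_mul_iff_one_le_left hvpos).mp h4
  have hTWge : 1 ≤ ‖TW‖ := by
    obtain ⟨y0, hy0⟩ := half2.2 x0
    set v : WithLp 2 (H × H) := (WithLp.equiv 2 (H × H)).symm (U x0, -(U y0)) with hvdef
    have hvf : v.fst = U x0 := rfl
    have hvs : v.snd = -(U y0) := rfl
    have hUf : adjoint U v.fst = x0 := by
      rw [hvf, ← ContinuousLinearMap.mul_apply, hUl, ContinuousLinearMap.one_apply]
    have hUs : adjoint U v.snd = -y0 := by
      rw [hvs, map_neg, ← ContinuousLinearMap.mul_apply, hUl, ContinuousLinearMap.one_apply]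
    have h1 : ‖TW v‖ ^ 2 = ‖v‖ ^ 2 := by
      rw [hTWsq v, hUf, hUs, neg_neg, WithLp.prod_norm_sq_eq_of_L2, hvf, hvs,
        norm_neg, hUiso, hUiso, hy0]
    have hvpos : 0 < ‖v‖ := by
      have h3 : ‖v‖ ^ 2 = ‖x0‖ ^ 2 + ‖y0‖ ^ 2 := by
        rw [WithLp.prod_norm_sq_eq_of_L2, hvf, hvs, norm_neg, hUiso, hUiso]
      nlinarith [norm_nonneg v, norm_nonneg y0]
    have h2 : ‖TW v‖ = ‖v‖ := by
      nlinarith [norm_nonneg (TW v), norm_nonneg v]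
    have h4 := TW.le_opNorm v
    rw [h2] at h4
    exact (le_mul_iff_one_le_left hvpos).mp h4
  exact ⟨hTZle, hTWle, fun _ => ⟨le_antisymm hTZle hTZge, le_antisymm hTWle hTWge⟩⟩
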